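/- Let K > 0, δ > β, γ^+ > 1, and let x⁴ = δKγ^+/((γ^+ − 1)(δ − β)) and ζ⁴ = (δK/(γ^+ − 1))^{1−γ^+} ((δ − β)/γ^+)^{γ^+}. Then for every x with 0 < x < x⁴, the continuation value strictly dominates the stopping payoff: βx + ζ⁴ x^{γ^+} > δ(x − K). -/

import Mathlib

theorem continuation_dominates
    (K δ β γp : ℝ) (hK : 0 < K) (hδβ : β < δ) (hγ : 1 < γp)
    (x4 ζ4 : ℝ)
    (hx4 : x4 = δ * K * γp / ((γp - 1) * (δ - β)))
    (hζ4 : ζ4 = (δ * K / (γp - 1)) ^ (1 - γp) * ((δ - β) / γp) ^ γp) :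
    ∀ x : ℝ, 0 < x → x < x4 → δ * (x - K) < β * x + ζ4 * x ^ γp := by
  intro x hx hxlt
  have hδβ' : 0 < δ - β := sub_pos.mpr hδβ
  have hγ1 : 0 < γp - 1 := sub_pos.mpr hγ
  have hγ0 : 0 < γp := by linarith
  -- δ must be positive, otherwise x4 ≤ 0 contradicts 0 < x < x4
  have hδ : 0 < δ := by
    by_contra h
    push_neg at h
    have hx4le : x4 ≤ 0 := by
      rw [hx4]
      apply div_nonpos_of_nonpos_of_nonneg
      · nlinarith [mul_pos hK hγ0]
      · positivity
    linarith
  set A : ℝ := δ * K / (γp - 1) with hA_def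
  set B : ℝ := (δ - β) / γp with hB_def
  have hA : 0 < A := by positivity
  have hB : 0 < B := by positivity
  have hx4AB : x4 = A / B := by
    rw [hx4, hA_def, hB_def]
    field_simp
  have hx4pos : 0 < x4 := by rw [hx4AB]; positivity
  set t : ℝ := x / x4 with ht_def
  have ht0 : 0 < t := div_pos hx hx4pos
  have ht1 : t < 1 := (div_lt_one hx4pos).mpr hxlt
  have hxt : x = x4 * t := by rw [ht_def, mul_div_assoc', mul_div_cancel_left₀ x hx4pos.ne']
  -- Bernoulli strict inequality at s = t - 1
  have hbern : 1 + γp * (t - 1) < t ^ γp := by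
    have := one_add_mul_self_lt_rpow_one_add (s := t - 1) (by linarith) (by
      intro h; apply absurd (sub_eq_zero.mp h); intro h'; rw [h'] at ht1; linarith) hγ
    simpa using this
  -- ζ4 * x4 ^ γp = A
  have hkey : ζ4 * x4 ^ γp = A := by
    rw [hζ4, hx4AB, Real.div_rpow hA.le hB.le]
    rw [div_eq_mul_inv, ← Real.rpow_neg hB.le]
    rw [show A ^ (1 - γp) * B ^ γp * (A ^ γp * B ^ (-γp)) =
        (A ^ (1 - γp) * A ^ γp) * (B ^ γp * B ^ (-γp)) by ring]
    rw [← Real.rpow_add hA, ← Real.rpow_add hB]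
    norm_num
  have hxrpow : x ^ γp = x4 ^ γp * t ^ γp := by
    rw [hxt, Real.mul_rpow hx4pos.le ht0.le]
  -- (δ - β) * x4 = A * γp and δ * K = A * (γp - 1)
  have h1 : (δ - β) * x4 = A * γp := by
    rw [hx4AB, hB_def]; field_simp
  have h2 : δ * K = A * (γp - 1) := by
    rw [hA_def]; field_simp
  have hmul : A * (1 + γp * (t - 1)) < A * t ^ γp :=
    mul_lt_mul_of_pos_left hbern hA
  have h1' : (δ - β) * x4 * t = A * γp * t := by rw [h1]
  have hζt : ζ4 * (x4 ^ γp * t ^ γp) = A * t ^ γp := by rw [← mul_assoc, hkey]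
  rw [hxrpow, hxt]
  nlinarith [hmul, h1', h2, hζt]
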